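/- Let K be a complex Hilbert space and P an orthogonal projection on K. If Q ∈ B(K) is skewadjoint (Q* = −Q), then its Holevo transform F[Q] := Q + Q·P·e₂(PQP)·P·Q satisfies the unitary structure relations with respect to the series product: F[Q]* ◁ F[Q] = 0 and F[Q] ◁ F[Q]* = 0, i.e. F[Q]* + F[Q] + F[Q]*·P·F[Q] = 0 and F[Q] + F[Q]* + F[Q]·P·F[Q]* = 0. -/

import Mathlib

open ContinuousLinearMap Filter Topology

noncomputable section

/-- `e₂(T) = ∑_{n≥0} Tⁿ/(n+2)!`. -/
def e2 {K : Type*} [NormedAddCommGroup K] [InnerProductSpace ℂ K]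
    (T : K →L[ℂ] K) : K →L[ℂ] K :=
  ∑' n : ℕ, (((n + 2).factorial : ℂ))⁻¹ • T ^ n

/-- The Holevo transform `F[Q] = Q + Q·P·e₂(PQP)·P·Q`. -/
def holevo {K : Type*} [NormedAddCommGroup K] [InnerProductSpace ℂ K]
    (P : K →L[ℂ] K) (Q : K →L[ℂ] K) : K →L[ℂ] K :=
  Q + Q * P * e2 (P * Q * P) * P * Q

open NormedSpace

section Aux

variable {K : Type*} [NormedAddCommGroup K] [InnerProductSpace ℂ K] [CompleteSpace K]

/-- auxiliary series `r₃(T) = ∑_{n≥0} Tⁿ/(n+3)!`. -/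
def r3 (T : K →L[ℂ] K) : K →L[ℂ] K := ∑' n : ℕ, (((n + 3).factorial : ℂ))⁻¹ • T ^ n

lemma summable_aux (T : K →L[ℂ] K) (c : ℕ → ℕ) (hc : ∀ n, n.factorial ≤ c n) :
    Summable (fun n : ℕ => ((c n : ℂ))⁻¹ • T ^ n) := by
  apply Summable.of_norm_bounded (Real.summable_pow_div_factorial ‖T‖)
  intro n
  rw [norm_smul]
  have h1 : ‖((c n : ℂ))⁻¹‖ ≤ ((n.factorial : ℝ))⁻¹ := by
    rw [norm_inv, Complex.norm_natCast]
    exact inv_anti₀ (by positivity) (by exact_mod_cast hc n)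
  have h2 : ‖T ^ n‖ ≤ ‖T‖ ^ n := by
    cases n with
    | zero => simp only [pow_zero]; exact ContinuousLinearMap.norm_id_le
    | succ m => exact norm_pow_le' _ m.succ_pos
  calc ‖((c n : ℂ))⁻¹‖ * ‖T ^ n‖
      ≤ ((n.factorial : ℝ))⁻¹ * ‖T‖ ^ n :=
        mul_le_mul h1 h2 (norm_nonneg _) (by positivity)
    _ = ‖T‖ ^ n / n.factorial := by ring


lemma e2_summable (T : K →L[ℂ] K) :
    Summable (fun n : ℕ => (((n + 2).factorial : ℂ))⁻¹ • T ^ n) :=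
  summable_aux T _ (fun n => Nat.factorial_le (by omega))


lemma commute_e2 {X T : K →L[ℂ] K} (h : Commute X T) : Commute X (e2 T) := by
  have hs := e2_summable T
  have h1 : HasSum (fun n : ℕ => X * ((((n + 2).factorial : ℂ))⁻¹ • T ^ n)) (X * e2 T) :=
    hs.hasSum.mul_left X
  have h2 : HasSum (fun n : ℕ => ((((n + 2).factorial : ℂ))⁻¹ • T ^ n) * X) (e2 T * X) :=
    hs.hasSum.mul_right X
  have heq : (fun n : ℕ => X * ((((n + 2).factorial : ℂ))⁻¹ • T ^ n))
      = fun n : ℕ => ((((n + 2).factorial : ℂ))⁻¹ • T ^ n) * X := by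
    funext n
    rw [mul_smul_comm, smul_mul_assoc, (h.pow_right n).eq]
  rw [heq] at h1
  exact h1.unique h2


lemma star_e2 (T : K →L[ℂ] K) : star (e2 T) = e2 (star T) := by
  rw [e2, e2, tsum_star]
  congr 1
  funext n
  rw [star_smul, star_pow]
  congr 1
  simp [Complex.star_def, map_inv₀, map_natCast]

lemma exp_eq_e2 (T : K →L[ℂ] K) : exp T = 1 + T + T ^ 2 * e2 T := by
  have hs : Summable (fun n : ℕ => ((n.factorial : ℂ))⁻¹ • T ^ n) :=
    summable_aux T _ (fun n => le_refl _)
  have hs1 : Summable (fun n : ℕ => (((n + 1).factorial : ℂ))⁻¹ • T ^ (n + 1)) := by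
    exact_mod_cast (summable_nat_add_iff 1).mpr hs
  have hmul : HasSum (fun n : ℕ => T ^ 2 * ((((n + 2).factorial : ℂ))⁻¹ • T ^ n))
      (T ^ 2 * e2 T) := (summable_aux T _ (fun n => Nat.factorial_le (by omega))).hasSum.mul_left _
  have heq : (fun n : ℕ => T ^ 2 * ((((n + 2).factorial : ℂ))⁻¹ • T ^ n))
      = fun n : ℕ => (((n + 2).factorial : ℂ))⁻¹ • T ^ (n + 2) := by
    funext n
    rw [mul_smul_comm, ← pow_add]
    ring_nf
  rw [heq] at hmul
  simp only [exp_eq_tsum ℂ]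
  rw [Summable.tsum_eq_zero_add hs, Summable.tsum_eq_zero_add hs1, hmul.tsum_eq]
  simp [Nat.factorial]
  abel


lemma e2_eq_r3 (T : K →L[ℂ] K) : e2 T = (2 : ℂ)⁻¹ • 1 + T * r3 T := by
  have hs : Summable (fun n : ℕ => (((n + 2).factorial : ℂ))⁻¹ • T ^ n) :=
    summable_aux T _ (fun n => Nat.factorial_le (by omega))
  have hmul : HasSum (fun n : ℕ => T * ((((n + 3).factorial : ℂ))⁻¹ • T ^ n)) (T * r3 T) :=
    (summable_aux T _ (fun n => Nat.factorial_le (by omega))).hasSum.mul_left _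
  have heq : (fun n : ℕ => T * ((((n + 3).factorial : ℂ))⁻¹ • T ^ n))
      = fun n : ℕ => ((((n + 1) + 2).factorial : ℂ))⁻¹ • T ^ (n + 1) := by
    funext n
    rw [mul_smul_comm, ← pow_succ']
  rw [heq] at hmul
  rw [e2, Summable.tsum_eq_zero_add hs, hmul.tsum_eq]
  norm_num [Nat.factorial]

lemma key (T : K →L[ℂ] K) (hT : star T = -T) :
    e2 T + e2 (-T) - 1 + (T * e2 (-T) - T * e2 T) + T ^ 2 * (e2 T * e2 (-T)) = 0 := by
  set a := e2 T with ha_def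
  set b := e2 (-T) with hb_def
  have hTa : Commute T a := commute_e2 (Commute.refl T)
  have hTb : Commute T b := commute_e2 (Commute.refl T).neg_right
  have hab : Commute a b := commute_e2 (hTa.symm.neg_right)
  set M := a + b - 1 + (T * b - T * a) + T ^ 2 * (a * b) with hM_def
  -- step 1: T^2 * M = 0
  have hexp : (1 + T + T ^ 2 * a) * (1 + -T + T ^ 2 * b) = 1 := by
    have h1 : exp (-T) = 1 + -T + T ^ 2 * b := by
      rw [exp_eq_e2, hb_def, neg_sq]
    rw [← exp_eq_e2, ← h1, ← exp_add_of_commute_of_mem_ball (𝕂 := ℂ) (Commute.refl T).neg_right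
        ((expSeries_radius_eq_top ℂ (K →L[ℂ] K)).symm ▸ edist_lt_top _ _)
        ((expSeries_radius_eq_top ℂ (K →L[ℂ] K)).symm ▸ edist_lt_top _ _), add_neg_cancel,
      exp_zero]
  have hT2M : T ^ 2 * M = 0 := by
    have expand : T ^ 2 * M = (1 + T + T ^ 2 * a) * (1 + -T + T ^ 2 * b) - 1 := by
      have e1 : a * T = T * a := hTa.symm.eq
      have e2' : ∀ x : K →L[ℂ] K, a * (T * x) = T * (a * x) := fun x => by
        rw [← mul_assoc, e1, mul_assoc]
      simp only [hM_def, pow_two, mul_add, add_mul, mul_sub, sub_mul, mul_one, one_mul,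
        mul_neg, neg_mul, mul_assoc, e1, e2']
      abel
    rw [expand, hexp, sub_self]
  -- step 2: star M = M
  have hstarM : star M = M := by
    have h2ab : T ^ 2 * (a * b) = a * b * T ^ 2 := ((hTa.mul_right hTb).pow_left 2).eq
    simp only [hM_def, ha_def, hb_def, star_add, star_sub, star_mul, star_one, star_pow,
      star_e2, hT, star_neg, neg_neg, neg_sq, mul_neg, neg_mul]
    rw [← hTa.eq, ← hTb.eq, ← h2ab]
    abel
  -- step 3: M * T ^ 2 = 0
  have hMT2 : M * T ^ 2 = 0 := by
    have := congrArg star hT2M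
    rwa [star_mul, hstarM, star_pow, hT, neg_sq, star_zero] at this
  -- step 4: T * M = 0
  have hTM : T * M = 0 := by
    have h0 : star (T * M) * (T * M) = 0 := by
      rw [star_mul, hstarM, hT]
      calc M * -T * (T * M) = -(M * T ^ 2 * M) := by noncomm_ring
        _ = 0 := by rw [hMT2, zero_mul, neg_zero]
    have h1 := CStarRing.norm_star_mul_self (x := T * M)
    rw [h0, norm_zero] at h1
    exact norm_eq_zero.mp (mul_self_eq_zero.mp h1.symm)
  -- step 5: M * T = 0
  have hMT : M * T = 0 := by
    have := congrArg star hTM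
    rw [star_mul, hstarM, hT, mul_neg, star_zero] at this
    exact neg_eq_zero.mp this
  -- step 6: M = T * W
  have hW : M = T * ((r3 T - r3 (-T)) + (b - a) + T * (a * b)) := by
    have hab1 : a + b - 1 = T * (r3 T - r3 (-T)) := by
      rw [ha_def, hb_def, e2_eq_r3 T, e2_eq_r3 (-T), mul_sub, neg_mul]
      have : ((2 : ℂ)⁻¹ • (1 : K →L[ℂ] K)) + (2 : ℂ)⁻¹ • 1 = 1 := by
        rw [← add_smul]; norm_num
      rw [add_add_add_comm, this]
      abel
    rw [hM_def, hab1, pow_two]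
    noncomm_ring
  -- step 7: M * M = 0, hence M = 0
  have hMM : M * M = 0 := by
    nth_rewrite 2 [hW]
    rw [← mul_assoc, hMT, zero_mul]
  have h1 := CStarRing.norm_star_mul_self (x := M)
  rw [hstarM, hMM, norm_zero] at h1
  exact norm_eq_zero.mp (mul_self_eq_zero.mp h1.symm)


end Aux

set_option maxHeartbeats 2000000 in
theorem holevo_transform_of_skewadjoint_satisfies_unitary_structure_relations
    {K : Type*} [NormedAddCommGroup K] [InnerProductSpace ℂ K] [CompleteSpace K]
    (P : K →L[ℂ] K) (hP : IsSelfAdjoint P) (hP2 : P * P = P)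
    (Q : K →L[ℂ] K) (hQ : adjoint Q = -Q) :
    adjoint (holevo P Q) + holevo P Q + adjoint (holevo P Q) * P * holevo P Q = 0 ∧
    holevo P Q + adjoint (holevo P Q) + holevo P Q * P * adjoint (holevo P Q) = 0 := by
  have hQ' : star Q = -Q := by rw [star_eq_adjoint, hQ]
  have hT : star (P * Q * P) = -(P * Q * P) := by
    simp only [star_mul, hP.star_eq, hQ', mul_neg, neg_mul, mul_assoc]
  set a := e2 (P * Q * P) with ha_def
  set b := e2 (-(P * Q * P)) with hb_def
  have hTa : Commute (P * Q * P) a := commute_e2 (Commute.refl (P * Q * P))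
  have hTb : Commute (P * Q * P) b := commute_e2 (Commute.refl (P * Q * P)).neg_right
  have hab : Commute a b := commute_e2 (hTa.symm.neg_right)
  have hM0 : a + b - 1 + ((P * Q * P) * b - (P * Q * P) * a) + (P * Q * P) ^ 2 * (a * b) = 0 := key (P * Q * P) hT
  -- two commuted variants of the key identity
  have hM1 : a + b - 1 + (b * (P * Q * P) - (P * Q * P) * a) + b * ((P * Q * P) * (P * Q * P)) * a = 0 := by
    have h1 : b * ((P * Q * P) * (P * Q * P)) * a = (P * Q * P) ^ 2 * (a * b) := by
      rw [← pow_two, ← (hTb.pow_left 2).eq, mul_assoc, ← hab.eq]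
    rw [h1, ← hTb.eq]
    exact hM0
  have hM2 : a + b - 1 + ((P * Q * P) * b - a * (P * Q * P)) + a * ((P * Q * P) * (P * Q * P)) * b = 0 := by
    have h1 : a * ((P * Q * P) * (P * Q * P)) * b = (P * Q * P) ^ 2 * (a * b) := by
      rw [← pow_two, ← (hTa.pow_left 2).eq, mul_assoc]
    rw [h1, ← hTa.eq]
    exact hM0
  -- star of the holevo transform
  have hstarF : star (holevo P Q) = -Q + Q * P * b * P * Q := by
    simp only [holevo, star_add, star_mul, hP.star_eq, hQ', star_e2, hT, hb_def,
      mul_neg, neg_mul, neg_neg, mul_assoc]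
  have hadjF : adjoint (holevo P Q) = -Q + Q * P * b * P * Q := by
    rw [← star_eq_adjoint]; exact hstarF
  have hPP : ∀ x : K →L[ℂ] K, P * (P * x) = P * x := fun x => by rw [← mul_assoc, hP2]
  have ha2 : e2 (P * (Q * P)) = a := by rw [ha_def, mul_assoc]
  constructor
  · rw [hadjF]
    have expand : (-Q + Q * P * b * P * Q) + holevo P Q +
        (-Q + Q * P * b * P * Q) * P * holevo P Q
        = (Q * P) * (a + b - 1 + (b * (P * Q * P) - (P * Q * P) * a) + b * ((P * Q * P) * (P * Q * P)) * a) * (P * Q) := by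
      simp only [holevo, mul_add, add_mul, mul_sub, sub_mul,
        neg_mul, mul_neg, mul_one, one_mul, mul_assoc, hPP, hP2, ha2]
      abel
    rw [expand, hM1, mul_zero, zero_mul]
  · rw [hadjF]
    have expand : holevo P Q + (-Q + Q * P * b * P * Q) +
        holevo P Q * P * (-Q + Q * P * b * P * Q)
        = (Q * P) * (a + b - 1 + ((P * Q * P) * b - a * (P * Q * P)) + a * ((P * Q * P) * (P * Q * P)) * b) * (P * Q) := by
      simp only [holevo, mul_add, add_mul, mul_sub, sub_mul,
        neg_mul, mul_neg, mul_one, one_mul, mul_assoc, hPP, hP2, ha2]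
      abel
    rw [expand, hM2, mul_zero, zero_mul]
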